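/- Let H be a 3-uniform hypergraph and let u be a rational vector indexed by the vertices satisfying Σ_{x∈e} u_x = 0 for every edge e. Let M be the maximum of |u_x| over all vertices x and let m > 0 be the minimum of |u_x| over all vertices x. Then H admits an LO colouring using at most 2 + log₂(M/m) colours. -/

import Mathlib

/-- A linearly ordered (LO) colouring of a hypergraph with edge set `E`:
every edge has a unique maximum. -/
def IsLOColouring {V α : Type*} [LinearOrder α] (E : Finset (Finset V)) (c : V → α) : Prop :=
  ∀ e ∈ E, ∃! x, x ∈ e ∧ ∀ y ∈ e, c y ≤ c x

namespace LOAux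

/-- dyadic level of `|q|/m`. -/
def lvl (m q : ℚ) : ℕ := Nat.log 2 ⌊|q| / m⌋₊

/-- the colour of a value. -/
def col (m q : ℚ) : ℕ := lvl m q + (lvl m q + if 0 < q then 1 else 0) % 2

def UniqMax3 (A B C : ℕ) : Prop :=
  (B < A ∧ C < A) ∨ (A < B ∧ C < B) ∨ (A < C ∧ B < C)

lemma lvl_neg (m q : ℚ) : lvl m (-q) = lvl m q := by unfold lvl; rw [abs_neg]

lemma lvl_mono {m a b : ℚ} (hm : 0 < m) (h : |a| ≤ |b|) : lvl m a ≤ lvl m b := by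
  unfold lvl
  exact Nat.log_mono_right (Nat.floor_le_floor (by gcongr))

lemma le_lvl {m q : ℚ} (hm : 0 < m) {k : ℕ} (h : 2 ^ k * m ≤ |q|) : k ≤ lvl m q := by
  have h1 : (2 : ℚ) ^ k ≤ |q| / m := (le_div_iff₀ hm).2 h
  have h2 : 2 ^ k ≤ ⌊|q| / m⌋₊ := Nat.le_floor (by push_cast; exact h1)
  have hp : 0 < 2 ^ k := Nat.pow_pos (by norm_num)
  have hn : ⌊|q| / m⌋₊ ≠ 0 := by omega
  exact (Nat.le_log_iff_pow_le one_lt_two hn).2 h2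

lemma pow_lvl_le {m q : ℚ} (hm : 0 < m) (h : m ≤ |q|) : 2 ^ lvl m q * m ≤ |q| := by
  have h1 : (1 : ℚ) ≤ |q| / m := (le_div_iff₀ hm).2 (by linarith)
  have hn : ⌊|q| / m⌋₊ ≠ 0 := by
    have := Nat.le_floor (α := ℚ) (n := 1) (by push_cast; exact h1)
    omega
  have h2 : (2 : ℚ) ^ lvl m q ≤ ⌊|q| / m⌋₊ := by
    exact_mod_cast Nat.cast_le.2 (Nat.pow_log_le_self 2 hn)
  have h3 : (⌊|q| / m⌋₊ : ℚ) ≤ |q| / m := Nat.floor_le (by positivity)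
  calc 2 ^ lvl m q * m ≤ (|q| / m) * m := by
        apply mul_le_mul_of_nonneg_right (le_trans h2 h3) hm.le
    _ = |q| := div_mul_cancel₀ _ hm.ne'

lemma lt_pow_lvl {m q : ℚ} (hm : 0 < m) : |q| < 2 ^ (lvl m q + 1) * m := by
  have h1 : |q| / m < ⌊|q| / m⌋₊ + 1 := Nat.lt_floor_add_one _
  have h2 : ⌊|q| / m⌋₊ < 2 ^ (lvl m q + 1) := Nat.lt_pow_succ_log_self one_lt_two _
  have h3 : (⌊|q| / m⌋₊ : ℚ) + 1 ≤ 2 ^ (lvl m q + 1) := by exact_mod_cast Nat.succ_le_of_lt h2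
  have h4 : |q| / m < 2 ^ (lvl m q + 1) := lt_of_lt_of_le h1 h3
  calc |q| = (|q| / m) * m := (div_mul_cancel₀ _ hm.ne').symm
    _ < 2 ^ (lvl m q + 1) * m := by
        apply mul_lt_mul_of_pos_right h4 hm

lemma lvl_lt {m q : ℚ} (hm : 0 < m) (hq : m ≤ |q|) {k : ℕ} (h : |q| < 2 ^ k * m) :
    lvl m q < k := by
  have h1 : |q| / m < 2 ^ k := (div_lt_iff₀ hm).2 h
  have h2 : ⌊|q| / m⌋₊ < 2 ^ k := by
    exact_mod_cast lt_of_le_of_lt (Nat.floor_le (by positivity)) h1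
  have h3 : (1 : ℚ) ≤ |q| / m := (le_div_iff₀ hm).2 (by linarith)
  have h4 : 1 ≤ ⌊|q| / m⌋₊ := Nat.le_floor (by push_cast; exact h3)
  exact Nat.log_lt_of_lt_pow (by omega) h2

lemma UniqMax3_swap12 {A B C : ℕ} (h : UniqMax3 A B C) : UniqMax3 B A C := by
  unfold UniqMax3 at *; omega

lemma UniqMax3_swap13 {A B C : ℕ} (h : UniqMax3 A B C) : UniqMax3 C B A := by
  unfold UniqMax3 at *; omega

lemma UniqMax3_swap23 {A B C : ℕ} (h : UniqMax3 A B C) : UniqMax3 A C B := by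
  unfold UniqMax3 at *; omega

lemma nat_key1 (jt js jr : ℕ) (h1 : js ≤ jt) (h2 : jr ≤ js) (h3 : jt ≤ js + 1)
    (h4 : jr < js ∨ js + 1 ≤ jt) :
    UniqMax3 (jt + (jt + 1) % 2) (js + js % 2) (jr + jr % 2) := by
  simp only [UniqMax3]; omega

lemma nat_key2 (jt js jr : ℕ) (h1 : js ≤ jt) (h2 : jr ≤ js) (h3 : jt ≤ js + 1)
    (h4 : jr < js ∨ js + 1 ≤ jt) :
    UniqMax3 (jt + jt % 2) (js + (js + 1) % 2) (jr + (jr + 1) % 2) := by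
  simp only [UniqMax3]; omega

lemma key' {m s r : ℚ} (hm : 0 < m) (hs : m ≤ s) (hr : m ≤ r) (hsr : r ≤ s) :
    UniqMax3 (col m (s + r)) (col m (-s)) (col m (-r)) ∧
    UniqMax3 (col m (-(s + r))) (col m s) (col m r) := by
  have hs0 : 0 < s := lt_of_lt_of_le hm hs
  have hr0 : 0 < r := lt_of_lt_of_le hm hr
  have ht0 : 0 < s + r := by linarith
  have habs_s : |s| = s := abs_of_pos hs0
  have habs_r : |r| = r := abs_of_pos hr0
  have habs_t : |s + r| = s + r := abs_of_pos ht0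
  have h1 : lvl m s ≤ lvl m (s + r) := lvl_mono hm (by rw [habs_s, habs_t]; linarith)
  have h2 : lvl m r ≤ lvl m s := lvl_mono hm (by rw [habs_r, habs_s]; exact hsr)
  have hsu : s < 2 ^ (lvl m s + 1) * m := by
    have := lt_pow_lvl (q := s) hm; rwa [habs_s] at this
  have h3 : lvl m (s + r) ≤ lvl m s + 1 := by
    have hlt : |s + r| < 2 ^ (lvl m s + 2) * m := by
      rw [habs_t]
      have he : (2 : ℚ) ^ (lvl m s + 2) * m = 2 * (2 ^ (lvl m s + 1) * m) := by ring
      rw [he]; linarith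
    have := lvl_lt hm (by rw [habs_t]; linarith) hlt
    omega
  have h4 : lvl m r < lvl m s ∨ lvl m s + 1 ≤ lvl m (s + r) := by
    rcases eq_or_lt_of_le h2 with he | hlt
    · right
      apply le_lvl hm
      rw [habs_t]
      have has : 2 ^ lvl m s * m ≤ s := by
        have := pow_lvl_le (q := s) hm (by rwa [habs_s]); rwa [habs_s] at this
      have har : 2 ^ lvl m r * m ≤ r := by
        have := pow_lvl_le (q := r) hm (by rwa [habs_r]); rwa [habs_r] at this
      rw [he] at har
      have he2 : (2 : ℚ) ^ (lvl m s + 1) * m = 2 ^ lvl m s * m + 2 ^ lvl m s * m := by ring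
      rw [he2]; linarith
    · left; exact hlt
  have hns : ¬ (0 : ℚ) < -s := by linarith
  have hnr : ¬ (0 : ℚ) < -r := by linarith
  have hnt : ¬ (0 : ℚ) < -(s + r) := by linarith
  have c1 : col m (s + r) = lvl m (s + r) + (lvl m (s + r) + 1) % 2 := by
    unfold col; rw [if_pos ht0]
  have c2 : col m (-s) = lvl m s + lvl m s % 2 := by
    unfold col; rw [lvl_neg, if_neg hns, add_zero]
  have c3 : col m (-r) = lvl m r + lvl m r % 2 := by
    unfold col; rw [lvl_neg, if_neg hnr, add_zero]
  have c4 : col m (-(s + r)) = lvl m (s + r) + lvl m (s + r) % 2 := by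
    unfold col; rw [lvl_neg, if_neg hnt, add_zero]
  have c5 : col m s = lvl m s + (lvl m s + 1) % 2 := by
    unfold col; rw [if_pos hs0]
  have c6 : col m r = lvl m r + (lvl m r + 1) % 2 := by
    unfold col; rw [if_pos hr0]
  rw [c1, c2, c3, c4, c5, c6]
  exact ⟨nat_key1 _ _ _ h1 h2 h3 h4, nat_key2 _ _ _ h1 h2 h3 h4⟩

lemma key {m s r : ℚ} (hm : 0 < m) (hs : m ≤ s) (hr : m ≤ r) :
    UniqMax3 (col m (s + r)) (col m (-s)) (col m (-r)) ∧
    UniqMax3 (col m (-(s + r))) (col m s) (col m r) := by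
  rcases le_total r s with h | h
  · exact key' hm hs hr h
  · have := key' hm hr hs h
    rw [add_comm r s] at this
    exact ⟨UniqMax3_swap23 this.1, UniqMax3_swap23 this.2⟩

lemma core {m a b c : ℚ} (hm : 0 < m) (habc : a + b + c = 0)
    (ha : m ≤ |a|) (hb : m ≤ |b|) (hc : m ≤ |c|) :
    UniqMax3 (col m a) (col m b) (col m c) := by
  have ha0 : a ≠ 0 := by intro h; rw [h, abs_zero] at ha; linarith
  have hb0 : b ≠ 0 := by intro h; rw [h, abs_zero] at hb; linarith
  have hc0 : c ≠ 0 := by intro h; rw [h, abs_zero] at hc; linarith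
  rcases ha0.lt_or_gt with ha1 | ha1 <;>
    rcases hb0.lt_or_gt with hb1 | hb1 <;>
      rcases hc0.lt_or_gt with hc1 | hc1
  · exfalso; linarith
  · -- a<0, b<0, c>0 : lone positive c = (-a)+(-b)
    have hc2 : c = (-a) + (-b) := by linarith
    have h := (key (s := -a) (r := -b) hm (by rwa [abs_of_neg ha1] at ha) (by rwa [abs_of_neg hb1] at hb)).1
    rw [← hc2, neg_neg, neg_neg] at h
    exact UniqMax3_swap13 (UniqMax3_swap23 h)
  · -- a<0, b>0, c<0 : lone positive b = (-a)+(-c)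
    have hb2 : b = (-a) + (-c) := by linarith
    have h := (key (s := -a) (r := -c) hm (by rwa [abs_of_neg ha1] at ha) (by rwa [abs_of_neg hc1] at hc)).1
    rw [← hb2, neg_neg, neg_neg] at h
    exact UniqMax3_swap12 h
  · -- a<0, b>0, c>0 : lone negative a = -(b+c)
    have ha2 : a = -(b + c) := by linarith
    have h := (key (s := b) (r := c) hm (by rwa [abs_of_pos hb1] at hb) (by rwa [abs_of_pos hc1] at hc)).2
    rwa [← ha2] at h
  · -- a>0, b<0, c<0 : lone positive a = (-b)+(-c)
    have ha2 : a = (-b) + (-c) := by linarith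
    have h := (key (s := -b) (r := -c) hm (by rwa [abs_of_neg hb1] at hb) (by rwa [abs_of_neg hc1] at hc)).1
    rw [← ha2, neg_neg, neg_neg] at h
    exact h
  · -- a>0, b<0, c>0 : lone negative b = -(a+c)
    have hb2 : b = -(a + c) := by linarith
    have h := (key (s := a) (r := c) hm (by rwa [abs_of_pos ha1] at ha) (by rwa [abs_of_pos hc1] at hc)).2
    rw [← hb2] at h
    exact UniqMax3_swap12 h
  · -- a>0, b>0, c<0 : lone negative c = -(a+b)
    have hc2 : c = -(a + b) := by linarith
    have h := (key (s := a) (r := b) hm (by rwa [abs_of_pos ha1] at ha) (by rwa [abs_of_pos hb1] at hb)).2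
    rw [← hc2] at h
    exact UniqMax3_swap13 (UniqMax3_swap23 h)
  · exfalso; linarith

end LOAux

/-- If `u` is a rational solution of the homogeneous system `∑_{x ∈ e} u x = 0` of a
3-uniform hypergraph, `M` is the maximum and `m > 0` the minimum of the absolute values
of the coordinates of `u`, then the hypergraph admits an LO colouring using at most
`2 + log₂(M/m)` colours. -/
theorem lo_colouring_of_homogeneous_solution
    {V : Type*} [Fintype V] (E : Finset (Finset V))
    (h3 : ∀ e ∈ E, e.card = 3)
    (u : V → ℚ) (hu : ∀ e ∈ E, ∑ x ∈ e, u x = 0)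
    (M m : ℚ)
    (hM : IsGreatest {r : ℚ | ∃ x : V, r = |u x|} M)
    (hm : IsLeast {r : ℚ | ∃ x : V, r = |u x|} m)
    (hm0 : 0 < m) :
    ∃ k : ℕ, (k : ℝ) ≤ 2 + Real.logb 2 ((M : ℝ) / (m : ℝ)) ∧
      ∃ c : V → Fin k, IsLOColouring E c := by
  classical
  open LOAux in
  -- basic facts
  have hmM : m ≤ M := hm.2 hM.1
  have hM0 : 0 < M := lt_of_lt_of_le hm0 hmM
  have hmem : ∀ x : V, m ≤ |u x| ∧ |u x| ≤ M := fun x =>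
    ⟨hm.2 ⟨x, rfl⟩, hM.2 ⟨x, rfl⟩⟩
  set L := lvl m M with hL
  refine ⟨L + 2, ?_, ?_⟩
  · -- cardinality bound
    have habsM : |M| = M := abs_of_pos hM0
    have h1 : (2 : ℚ) ^ L * m ≤ M := by
      have := pow_lvl_le (m := m) (q := M) hm0 (by rwa [habsM])
      rwa [habsM] at this
    have h2 : (2 : ℚ) ^ L ≤ M / m := (le_div_iff₀ hm0).2 h1
    have h3 : (2 : ℝ) ^ (L : ℝ) ≤ (M : ℝ) / (m : ℝ) := by
      rw [Real.rpow_natCast]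
      exact_mod_cast h2
    have h4 : (L : ℝ) ≤ Real.logb 2 ((M : ℝ) / (m : ℝ)) := by
      rw [Real.le_logb_iff_rpow_le (by norm_num) (by positivity)]
      exact h3
    push_cast
    linarith
  · -- the colouring
    have hbound : ∀ x : V, col m (u x) < L + 2 := by
      intro x
      have h1 : lvl m (u x) ≤ L := lvl_mono hm0 (by
        rw [abs_of_pos hM0]; exact (hmem x).2)
      have h2 : (lvl m (u x) + if 0 < u x then 1 else 0) % 2 ≤ 1 :=
        Nat.le_of_lt_succ (Nat.mod_lt _ (by norm_num))
      have h3 : col m (u x) ≤ lvl m (u x) + 1 := Nat.add_le_add_left h2 _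
      exact lt_of_le_of_lt (le_trans h3 (Nat.add_le_add_right h1 1))
        (Nat.lt_succ_self (L + 1))
    refine ⟨fun x => ⟨col m (u x), hbound x⟩, ?_⟩
    intro e he
    obtain ⟨x, y, z, hxy, hxz, hyz, rfl⟩ := Finset.card_eq_three.mp (h3 e he)
    have hsum : u x + u y + u z = 0 := by
      have := hu _ he
      rwa [Finset.sum_insert (by simp [hxy, hxz]),
        Finset.sum_insert (by simp [hyz]), Finset.sum_singleton, ← add_assoc] at this
    have hcore := core hm0 hsum (hmem x).1 (hmem y).1 (hmem z).1
    have hmemv : ∀ v, v ∈ ({x, y, z} : Finset V) ↔ v = x ∨ v = y ∨ v = z := by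
      intro v; simp [Finset.mem_insert]
    rcases hcore with ⟨hA, hB⟩ | ⟨hA, hB⟩ | ⟨hA, hB⟩
    · refine ⟨x, ⟨(hmemv x).2 (Or.inl rfl), ?_⟩, ?_⟩
      · intro w hw
        rcases (hmemv w).1 hw with rfl | rfl | rfl
        · exact le_refl _
        · exact Fin.mk_le_mk.2 hA.le
        · exact Fin.mk_le_mk.2 hB.le
      · rintro v ⟨hv, hvmax⟩
        rcases (hmemv v).1 hv with rfl | rfl | rfl
        · rfl
        · exact absurd (Fin.mk_le_mk.1 (hvmax x ((hmemv x).2 (Or.inl rfl)))) (not_le.2 hA)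
        · exact absurd (Fin.mk_le_mk.1 (hvmax x ((hmemv x).2 (Or.inl rfl)))) (not_le.2 hB)
    · refine ⟨y, ⟨(hmemv y).2 (Or.inr (Or.inl rfl)), ?_⟩, ?_⟩
      · intro w hw
        rcases (hmemv w).1 hw with rfl | rfl | rfl
        · exact Fin.mk_le_mk.2 hA.le
        · exact le_refl _
        · exact Fin.mk_le_mk.2 hB.le
      · rintro v ⟨hv, hvmax⟩
        rcases (hmemv v).1 hv with rfl | rfl | rfl
        · exact absurd (Fin.mk_le_mk.1 (hvmax y ((hmemv y).2 (Or.inr (Or.inl rfl)))))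
            (not_le.2 hA)
        · rfl
        · exact absurd (Fin.mk_le_mk.1 (hvmax y ((hmemv y).2 (Or.inr (Or.inl rfl)))))
            (not_le.2 hB)
    · refine ⟨z, ⟨(hmemv z).2 (Or.inr (Or.inr rfl)), ?_⟩, ?_⟩
      · intro w hw
        rcases (hmemv w).1 hw with rfl | rfl | rfl
        · exact Fin.mk_le_mk.2 hA.le
        · exact Fin.mk_le_mk.2 hB.le
        · exact le_refl _
      · rintro v ⟨hv, hvmax⟩
        rcases (hmemv v).1 hv with rfl | rfl | rfl
        · exact absurd (Fin.mk_le_mk.1 (hvmax z ((hmemv z).2 (Or.inr (Or.inr rfl)))))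
            (not_le.2 hA)
        · exact absurd (Fin.mk_le_mk.1 (hvmax z ((hmemv z).2 (Or.inr (Or.inr rfl)))))
            (not_le.2 hB)
        · rfl
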